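/- Let α, β ∈ ℝ with α > 0, β ≥ 0, and let N : [0,∞) → ℝ be continuous and nonnegative. If N(t) ≥ c·(1+t)^{−β} for some c > 0 and all t ≥ T₁ ≥ 0, and β < 2, then ∫₀ᵗ (1+s)^{−μ} ∫₀ˢ (1+τ)^μ N(τ) dτ ds ≥ C (1+t)^{2−β} for some C > 0 and all t large enough (for any fixed μ > 0). -/

import Mathlib

open MeasureTheory intervalIntegral

/-- If `N(t) ≥ c(1+t)^{-β}` for `t ≥ T₁` with `0 ≤ β < 2`, then the double
integral `∫₀ᵗ (1+s)^{-μ} ∫₀ˢ (1+τ)^μ N(τ) dτ ds` grows at least like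
`C(1+t)^{2-β}` for large `t`. -/
theorem double_integral_growth (μ β c T₁ : ℝ) (hμ : 0 < μ)
    (hβ0 : 0 ≤ β) (hβ2 : β < 2) (hc : 0 < c) (hT₁ : 0 ≤ T₁)
    (Nf : ℝ → ℝ) (hNc : Continuous Nf) (hNpos : ∀ t : ℝ, 0 ≤ t → 0 ≤ Nf t)
    (hlow : ∀ t : ℝ, T₁ ≤ t → c * (1 + t) ^ (-β) ≤ Nf t) :
    ∃ C > (0 : ℝ), ∃ T : ℝ, ∀ t : ℝ, T ≤ t →
      C * (1 + t) ^ (2 - β)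
        ≤ ∫ s in (0 : ℝ)..t, (1 + s) ^ (-μ) * ∫ τ in (0 : ℝ)..s, (1 + τ) ^ μ * Nf τ := by
  set f : ℝ → ℝ := fun τ => (1 + τ) ^ μ * Nf τ with hfdef
  have hfc : Continuous f :=
    ((Real.continuous_rpow_const hμ.le).comp (continuous_const.add continuous_id)).mul hNc
  set g : ℝ → ℝ := fun s => ∫ τ in (0:ℝ)..s, f τ with hgdef
  have hgc : Continuous g :=
    intervalIntegral.continuous_primitive (fun a b => hfc.intervalIntegrable a b) 0
  have hfnn : ∀ τ : ℝ, 0 ≤ τ → 0 ≤ f τ := fun τ hτ =>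
    mul_nonneg (Real.rpow_nonneg (by linarith) _) (hNpos τ hτ)
  have hgnn : ∀ s : ℝ, 0 ≤ s → 0 ≤ g s := fun s hs =>
    intervalIntegral.integral_nonneg hs (fun u hu => hfnn u hu.1)
  have h2μ : (0:ℝ) < (2:ℝ) ^ μ := Real.rpow_pos_of_pos (by norm_num) μ
  refine ⟨c / ((2:ℝ) ^ μ * 32), by positivity, max 2 (4 * T₁), ?_⟩
  intro t ht
  have ht2 : (2:ℝ) ≤ t := le_trans (le_max_left _ _) ht
  have htT₁ : T₁ ≤ t / 4 := by
    have := le_trans (le_max_right _ _) ht; linarith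
  have h1t : (0:ℝ) < 1 + t := by linarith
  -- define h (the outer integrand) and prove its continuity on [0, t]
  set h : ℝ → ℝ := fun s => (1 + s) ^ (-μ) * g s with hhdef
  have hhcont : ContinuousOn h (Set.Icc 0 t) := by
    apply ContinuousOn.mul _ hgc.continuousOn
    exact ((continuous_const.add continuous_id).continuousOn).rpow_const
      (fun x hx => Or.inl (ne_of_gt (by
        simp only [Set.mem_Icc] at hx; show (0:ℝ) < 1 + x; linarith [hx.1])))
  have hhint1 : IntervalIntegrable h volume 0 (t / 2) := by
    apply (hhcont.mono ?_).intervalIntegrable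
    rw [Set.uIcc_of_le (by linarith)]
    exact Set.Icc_subset_Icc le_rfl (by linarith)
  have hhint2 : IntervalIntegrable h volume (t / 2) t := by
    apply (hhcont.mono ?_).intervalIntegrable
    rw [Set.uIcc_of_le (by linarith)]
    exact Set.Icc_subset_Icc (by linarith) le_rfl
  -- the constant lower bound for h on [t/2, t]
  set L : ℝ := c / ((2:ℝ) ^ μ * 8) * ((1 + t) * (1 + t) ^ (-β)) with hLdef
  have hL0 : 0 ≤ L := by positivity
  have hbound : ∀ s ∈ Set.Icc (t / 2) t, L ≤ h s := by
    intro s hs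
    obtain ⟨hs1, hs2⟩ := hs
    have hs0 : (0:ℝ) ≤ s := by linarith
    have h1s : (0:ℝ) < 1 + s := by linarith
    -- inner pointwise bound: K ≤ f τ for τ ∈ [s/2, s]
    set K : ℝ := c * ((1 + s) / 2) ^ μ * (1 + s) ^ (-β) with hKdef
    have hinner : ∀ τ ∈ Set.Icc (s / 2) s, K ≤ f τ := by
      intro τ hτ
      obtain ⟨hτ1, hτ2⟩ := hτ
      have h1τ : (0:ℝ) < 1 + τ := by linarith
      have hb1 : ((1 + s) / 2) ^ μ ≤ (1 + τ) ^ μ :=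
        Real.rpow_le_rpow (by linarith) (by linarith) hμ.le
      have hb2 : c * (1 + s) ^ (-β) ≤ Nf τ := by
        refine le_trans ?_ (hlow τ (by linarith))
        have : (1 + s) ^ (-β) ≤ (1 + τ) ^ (-β) :=
          Real.rpow_le_rpow_of_nonpos h1τ (by linarith) (by linarith)
        nlinarith
      calc K = ((1 + s) / 2) ^ μ * (c * (1 + s) ^ (-β)) := by rw [hKdef]; ring
        _ ≤ (1 + τ) ^ μ * Nf τ := by
            apply mul_le_mul hb1 hb2 (by positivity) (Real.rpow_nonneg (by linarith) μ)
    -- hence g s ≥ (s - s/2) * K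
    have hgs : (s - s / 2) * K ≤ g s := by
      have hsplit : g s = (∫ τ in (0:ℝ)..(s/2), f τ) + ∫ τ in (s/2:ℝ)..s, f τ :=
        (intervalIntegral.integral_add_adjacent_intervals
          (hfc.intervalIntegrable _ _) (hfc.intervalIntegrable _ _)).symm
      have h1 : (0:ℝ) ≤ ∫ τ in (0:ℝ)..(s/2), f τ :=
        intervalIntegral.integral_nonneg (by linarith) (fun u hu => hfnn u hu.1)
      have h2 : (s - s / 2) * K ≤ ∫ τ in (s/2:ℝ)..s, f τ := by
        have := intervalIntegral.integral_mono_on (by linarith : s/2 ≤ s)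
          (intervalIntegrable_const : IntervalIntegrable _ volume _ _) (hfc.intervalIntegrable _ _) hinner
        rwa [intervalIntegral.integral_const, smul_eq_mul] at this
      calc (s - s / 2) * K ≤ ∫ τ in (s/2:ℝ)..s, f τ := h2
        _ ≤ g s := by rw [hsplit]; linarith
    -- now bound h s from below
    have hrp : (0:ℝ) ≤ (1 + s) ^ (-μ) := Real.rpow_nonneg h1s.le _
    have step1 : (1 + s) ^ (-μ) * ((s - s / 2) * K) ≤ h s :=
      mul_le_mul_of_nonneg_left hgs hrp
    have heq : (1 + s) ^ (-μ) * ((s - s / 2) * K)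
        = s / 2 * (c / (2:ℝ) ^ μ) * (1 + s) ^ (-β) := by
      rw [hKdef, Real.div_rpow h1s.le (by norm_num : (0:ℝ) ≤ 2),
        Real.rpow_neg h1s.le μ]
      have hA : (1 + s) ^ μ ≠ 0 := ne_of_gt (Real.rpow_pos_of_pos h1s μ)
      field_simp
      ring
    have hBt : (1 + t) ^ (-β) ≤ (1 + s) ^ (-β) :=
      Real.rpow_le_rpow_of_nonpos h1s (by linarith) (by linarith)
    have hBt0 : (0:ℝ) ≤ (1 + t) ^ (-β) := Real.rpow_nonneg h1t.le _
    have hs8 : (1 + t) / 8 ≤ s / 2 := by linarith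
    have hkey : (1 + t) / 8 * ((1 + t) ^ (-β)) ≤ s / 2 * ((1 + s) ^ (-β)) :=
      mul_le_mul hs8 hBt hBt0 (by linarith)
    have : L ≤ s / 2 * (c / (2:ℝ) ^ μ) * (1 + s) ^ (-β) := by
      have hcd : (0:ℝ) ≤ c / (2:ℝ) ^ μ := by positivity
      calc L = (c / (2:ℝ) ^ μ) * ((1 + t) / 8 * ((1 + t) ^ (-β))) := by
              rw [hLdef]; field_simp
        _ ≤ (c / (2:ℝ) ^ μ) * (s / 2 * ((1 + s) ^ (-β))) :=
              mul_le_mul_of_nonneg_left hkey hcd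
        _ = s / 2 * (c / (2:ℝ) ^ μ) * (1 + s) ^ (-β) := by ring
    rw [heq] at step1
    linarith
  -- split the outer integral and bound
  have hsplit : (∫ s in (0:ℝ)..t, h s)
      = (∫ s in (0:ℝ)..(t/2), h s) + ∫ s in (t/2:ℝ)..t, h s :=
    (intervalIntegral.integral_add_adjacent_intervals hhint1 hhint2).symm
  have h1 : (0:ℝ) ≤ ∫ s in (0:ℝ)..(t/2), h s := by
    apply intervalIntegral.integral_nonneg (by linarith)
    intro u hu
    exact mul_nonneg (Real.rpow_nonneg (by linarith [hu.1]) _) (hgnn u hu.1)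
  have h2 : (t - t / 2) * L ≤ ∫ s in (t/2:ℝ)..t, h s := by
    have := intervalIntegral.integral_mono_on (by linarith : t/2 ≤ t)
      (intervalIntegrable_const : IntervalIntegrable _ volume _ _) hhint2 hbound
    rwa [intervalIntegral.integral_const, smul_eq_mul] at this
  have hfinal : c / ((2:ℝ) ^ μ * 32) * (1 + t) ^ (2 - β) ≤ (t - t / 2) * L := by
    have hexp : (1 + t) ^ (2 - β) = (1 + t) * (1 + t) * (1 + t) ^ (-β) := by
      rw [show (2 - β : ℝ) = 1 + (1 + -β) by ring, Real.rpow_add h1t,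
        Real.rpow_add h1t, Real.rpow_one]
      ring
    rw [hexp, hLdef]
    have hBt0 : (0:ℝ) ≤ (1 + t) ^ (-β) := Real.rpow_nonneg h1t.le _
    have ht4 : (1 + t) / 4 ≤ t - t / 2 := by linarith
    have key : (1 + t) / 4 * (c / ((2:ℝ) ^ μ * 8) * ((1 + t) * (1 + t) ^ (-β)))
        ≤ (t - t / 2) * (c / ((2:ℝ) ^ μ * 8) * ((1 + t) * (1 + t) ^ (-β))) := by
      apply mul_le_mul_of_nonneg_right ht4 (by positivity)
    calc c / ((2:ℝ) ^ μ * 32) * ((1 + t) * (1 + t) * (1 + t) ^ (-β))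
        = (1 + t) / 4 * (c / ((2:ℝ) ^ μ * 8) * ((1 + t) * (1 + t) ^ (-β))) := by
          field_simp; ring
      _ ≤ _ := key
  calc c / ((2:ℝ) ^ μ * 32) * (1 + t) ^ (2 - β)
      ≤ (t - t / 2) * L := hfinal
    _ ≤ ∫ s in (0:ℝ)..t, h s := by rw [hsplit]; linarith
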